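/- arXiv:1805.03275 — 2 statements merged into one kernel-verified Lean document; each statement's English description precedes it below -/
import Mathlib

section
/- Suppose additionally g has the partly linear form g(X) = γ₁'X₁ + g₂(X₂). Then with V₂ the population residual of X₂ on X₁, the subvector β₂ of the best linear approximation coefficient satisfies β₂ = E[V₂V₂']^{-1}E[V₂ g₂(X₂)] = argmin over b₂ of E[(g₂(X₂) - b₂'V₂)²]. -/
open MeasureTheory

open Matrix

section Helpers

section Helpers
variable {Ω : Type*} [MeasurableSpace Ω] {μ : Measure Ω}

private lemma int_mul {f h : Ω → ℝ} (hf : MemLp f 2 μ) (hh : MemLp h 2 μ) :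
    Integrable (fun ω => f ω * h ω) μ := by
  have h1 : (1 : ENNReal) / 1 = 1 / 2 + 1 / 2 := by
    rw [ENNReal.div_add_div_same, one_add_one_eq_two, one_div_one]
    exact (ENNReal.div_self two_ne_zero ENNReal.ofNat_ne_top).symm
  have : Integrable (fun ω => f ω * h ω) μ := hf.integrable_mul hh
  simpa [smul_eq_mul, mul_comm] using this

private lemma int_mul_sum {ι : Type*} [Fintype ι] {f : Ω → ℝ} (hf : MemLp f 2 μ)
    (c : ι → ℝ) {h : ι → Ω → ℝ} (hh : ∀ i, MemLp (h i) 2 μ) :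
    ∫ ω, f ω * ∑ i, c i * h i ω ∂μ = ∑ i, c i * ∫ ω, f ω * h i ω ∂μ := by
  have e : ∀ ω, f ω * ∑ i, c i * h i ω = ∑ i, c i * (f ω * h i ω) := by
    intro ω; rw [Finset.mul_sum]; exact Finset.sum_congr rfl fun i _ => by ring
  simp_rw [e]
  rw [integral_finset_sum _ fun i _ => ((int_mul hf (hh i)).const_mul (c i))]
  exact Finset.sum_congr rfl fun i _ => integral_const_mul _ _

private lemma int_sum_mul {ι : Type*} [Fintype ι] (c : ι → ℝ) {h : ι → Ω → ℝ}
    (hh : ∀ i, MemLp (h i) 2 μ) {k : Ω → ℝ} (hk : MemLp k 2 μ) :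
    ∫ ω, (∑ i, c i * h i ω) * k ω ∂μ = ∑ i, c i * ∫ ω, h i ω * k ω ∂μ := by
  have e : ∀ ω, (∑ i, c i * h i ω) * k ω = k ω * ∑ i, c i * h i ω := fun ω => mul_comm _ _
  simp_rw [e, int_mul_sum hk c hh]
  exact Finset.sum_congr rfl fun i _ => by
    rw [show ∫ ω, k ω * h i ω ∂μ = ∫ ω, h i ω * k ω ∂μ from by simp_rw [mul_comm]]

private lemma memℒp_sum {ι : Type*} [Fintype ι] (c : ι → ℝ) {h : ι → Ω → ℝ}
    (hh : ∀ i, MemLp (h i) 2 μ) : MemLp (fun ω => ∑ i, c i * h i ω) 2 μ :=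
  memLp_finset_sum _ fun i _ => (hh i).const_mul (c i)

private lemma int_sq_sum {ι : Type*} [Fintype ι] (c : ι → ℝ) {h : ι → Ω → ℝ}
    (hh : ∀ i, MemLp (h i) 2 μ) :
    ∫ ω, (∑ i, c i * h i ω) ^ 2 ∂μ
      = ∑ i, c i * ∑ j, c j * ∫ ω, h i ω * h j ω ∂μ := by
  have e : ∀ ω, (∑ i, c i * h i ω) ^ 2 = (∑ i, c i * h i ω) * ∑ i, c i * h i ω :=
    fun ω => sq _
  simp_rw [e, int_sum_mul c hh (memℒp_sum c hh)]
  exact Finset.sum_congr rfl fun i _ => by rw [int_mul_sum (hh i) c hh]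

private theorem aux16
    (μ : Measure Ω) [IsProbabilityMeasure μ]
    {p₁ p₂ : ℕ}
    (X : Ω → (Fin p₁ ⊕ Fin p₂) → ℝ) (G G₂ : Ω → ℝ) (γ₁ : Fin p₁ → ℝ)
    (hpl : ∀ ω, G ω = (∑ j, γ₁ j * X ω (Sum.inl j)) + G₂ ω)
    (hXi : ∀ i, MemLp (fun ω => X ω i) 2 μ)
    (hg : MemLp G 2 μ) (hg₂ : MemLp G₂ 2 μ)
    (M : Matrix (Fin p₁ ⊕ Fin p₂) (Fin p₁ ⊕ Fin p₂) ℝ)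
    (hM : M = Matrix.of fun i j => ∫ ω, X ω i * X ω j ∂μ)
    (hMpos : M.PosDef)
    (β : (Fin p₁ ⊕ Fin p₂) → ℝ)
    (hβ : β = M⁻¹.mulVec fun i => ∫ ω, X ω i * G ω ∂μ)
    (M11 : Matrix (Fin p₁) (Fin p₁) ℝ)
    (hM11 : M11 = Matrix.of fun a b => ∫ ω, X ω (Sum.inl a) * X ω (Sum.inl b) ∂μ)
    (M21 : Matrix (Fin p₂) (Fin p₁) ℝ)
    (hM21 : M21 = Matrix.of fun a b => ∫ ω, X ω (Sum.inr a) * X ω (Sum.inl b) ∂μ)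
    (V2 : Ω → Fin p₂ → ℝ)
    (hV2 : ∀ ω a, V2 ω a =
      X ω (Sum.inr a) - ∑ b, (M21 * M11⁻¹) a b * X ω (Sum.inl b))
    (MV : Matrix (Fin p₂) (Fin p₂) ℝ)
    (hMV : MV = Matrix.of fun a b => ∫ ω, V2 ω a * V2 ω b ∂μ) :
    (fun a => β (Sum.inr a)) =
        MV⁻¹.mulVec (fun a => ∫ ω, V2 ω a * G₂ ω ∂μ) ∧
      ∀ b₂ : Fin p₂ → ℝ,
        (∫ ω, (G₂ ω - ∑ a, β (Sum.inr a) * V2 ω a) ^ 2 ∂μ) ≤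
          ∫ ω, (G₂ ω - ∑ a, b₂ a * V2 ω a) ^ 2 ∂μ := by
  -- entries
  have hMentry : ∀ i j, M i j = ∫ ω, X ω i * X ω j ∂μ := fun i j => by rw [hM]; rfl
  have hM11entry : ∀ a b, M11 a b = ∫ ω, X ω (Sum.inl a) * X ω (Sum.inl b) ∂μ :=
    fun a b => by rw [hM11]; rfl
  have hM21entry : ∀ a b, M21 a b = ∫ ω, X ω (Sum.inr a) * X ω (Sum.inl b) ∂μ :=
    fun a b => by rw [hM21]; rfl
  have hMVentry : ∀ a b, MV a b = ∫ ω, V2 ω a * V2 ω b ∂μ := fun a b => by rw [hMV]; rfl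
  -- memberships
  have hVmem : ∀ a, MemLp (fun ω => V2 ω a) 2 μ := by
    intro a
    have e : (fun ω => V2 ω a)
        = fun ω => X ω (Sum.inr a) - ∑ b, (M21 * M11⁻¹) a b * X ω (Sum.inl b) :=
      funext fun ω => hV2 ω a
    rw [e]
    exact (hXi _).sub (memℒp_sum _ fun b => hXi (Sum.inl b))
  have hBxmem : MemLp (fun ω => ∑ j, β j * X ω j) 2 μ := memℒp_sum _ hXi
  have hGres : MemLp (fun ω => G ω - ∑ j, β j * X ω j) 2 μ := hg.sub hBxmem
  -- M11 positive definite
  have hMM11 : ∀ b b', M (Sum.inl b) (Sum.inl b') = M11 b b' := fun b b' => by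
    rw [hMentry, hM11entry]
  have hM11pos : M11.PosDef := by
    refine Matrix.PosDef.of_dotProduct_mulVec_pos ?_ ?_
    · ext b b'
      simp only [Matrix.conjTranspose_apply, star_trivial]
      rw [hM11entry, hM11entry]
      simp_rw [mul_comm]
    · intro x hx
      set y : (Fin p₁ ⊕ Fin p₂) → ℝ := Sum.elim x 0 with hy
      have hy0 : y ≠ 0 := fun h0 => hx (funext fun b => by
        have := congrFun h0 (Sum.inl b); simpa [hy] using this)
      have hpos := hMpos.dotProduct_mulVec_pos hy0
      have e : star y ⬝ᵥ M *ᵥ y = star x ⬝ᵥ M11 *ᵥ x := by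
        simp only [dotProduct, Matrix.mulVec, Fintype.sum_sum_type, hy,
          Sum.elim_inl, Sum.elim_inr, Pi.star_apply, star_trivial, mul_zero, zero_mul,
          Finset.sum_const_zero, add_zero, hMM11, Pi.zero_apply]
      rwa [e] at hpos
  have hM11det : IsUnit M11.det := isUnit_iff_ne_zero.mpr hM11pos.det_pos.ne'
  -- orthogonality of V2 to X1
  have hortho : ∀ a b, ∫ ω, V2 ω a * X ω (Sum.inl b) ∂μ = 0 := by
    have hCM11 : M21 * M11⁻¹ * M11 = M21 := by
      rw [Matrix.mul_assoc, Matrix.nonsing_inv_mul _ hM11det, Matrix.mul_one]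
    intro a b
    have e : ∀ ω, V2 ω a * X ω (Sum.inl b)
        = X ω (Sum.inr a) * X ω (Sum.inl b)
          - ∑ b', (M21 * M11⁻¹) a b' * (X ω (Sum.inl b') * X ω (Sum.inl b)) := by
      intro ω
      rw [hV2 ω a, sub_mul, Finset.sum_mul]
      congr 1
      exact Finset.sum_congr rfl fun b' _ => mul_assoc _ _ _
    simp_rw [e]
    rw [integral_sub (int_mul (hXi _) (hXi _))
        (integrable_finset_sum _ fun b' _ => (int_mul (hXi _) (hXi _)).const_mul _),
      integral_finset_sum _ fun b' _ => (int_mul (hXi _) (hXi _)).const_mul _]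
    simp_rw [integral_const_mul]
    have e2 : ∑ b', (M21 * M11⁻¹) a b' * ∫ ω, X ω (Sum.inl b') * X ω (Sum.inl b) ∂μ
        = (M21 * M11⁻¹ * M11) a b := by
      rw [Matrix.mul_apply]
      exact Finset.sum_congr rfl fun b' _ => by rw [hM11entry]
    rw [e2, hCM11, ← hM21entry, sub_self]
  -- normal equations
  have hNE : ∀ i, ∑ j, M i j * β j = ∫ ω, X ω i * G ω ∂μ := by
    have hMdet : IsUnit M.det := isUnit_iff_ne_zero.mpr hMpos.det_pos.ne'
    intro i
    have h1 : M.mulVec β = fun i => ∫ ω, X ω i * G ω ∂μ := by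
      rw [hβ, Matrix.mulVec_mulVec, Matrix.mul_nonsing_inv _ hMdet, Matrix.one_mulVec]
    have h2 := congrFun h1 i
    simpa [Matrix.mulVec, dotProduct] using h2
  -- residual orthogonality to X
  have hres : ∀ i, ∫ ω, X ω i * (G ω - ∑ j, β j * X ω j) ∂μ = 0 := by
    intro i
    have e : ∀ ω, X ω i * (G ω - ∑ j, β j * X ω j)
        = X ω i * G ω - X ω i * ∑ j, β j * X ω j := fun ω => by ring
    simp_rw [e]
    rw [integral_sub (int_mul (hXi i) hg) (int_mul (hXi i) hBxmem),
      int_mul_sum (hXi i) β hXi, ← hNE i, sub_eq_zero]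
    exact Finset.sum_congr rfl fun j _ => by rw [hMentry]; ring
  -- key orthogonality : V2 ⟂ residual of G₂ on V2
  have hdecomp : ∀ ω, G₂ ω - ∑ a', β (Sum.inr a') * V2 ω a'
      = (G ω - ∑ j, β j * X ω j)
        + ∑ b, (β (Sum.inl b) + (∑ a', β (Sum.inr a') * (M21 * M11⁻¹) a' b) - γ₁ b)
            * X ω (Sum.inl b) := by
    intro ω
    have e1 : ∑ a', β (Sum.inr a') * V2 ω a'
        = (∑ a', β (Sum.inr a') * X ω (Sum.inr a'))
          - ∑ b, (∑ a', β (Sum.inr a') * (M21 * M11⁻¹) a' b) * X ω (Sum.inl b) := by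
      have h3 : ∀ a', β (Sum.inr a') * V2 ω a'
          = β (Sum.inr a') * X ω (Sum.inr a')
            - ∑ b, β (Sum.inr a') * ((M21 * M11⁻¹) a' b * X ω (Sum.inl b)) := by
        intro a'; rw [hV2 ω a', mul_sub, Finset.mul_sum]
      rw [Finset.sum_congr rfl fun a' _ => h3 a', Finset.sum_sub_distrib]
      congr 1
      rw [Finset.sum_comm]
      exact Finset.sum_congr rfl fun b _ => by
        rw [Finset.sum_mul]; exact Finset.sum_congr rfl fun a' _ => by ring
    have e2 : ∑ j, β j * X ω j
        = (∑ b, β (Sum.inl b) * X ω (Sum.inl b))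
          + ∑ a', β (Sum.inr a') * X ω (Sum.inr a') := Fintype.sum_sum_type _
    have e3 : ∑ b, (β (Sum.inl b) + (∑ a', β (Sum.inr a') * (M21 * M11⁻¹) a' b) - γ₁ b)
            * X ω (Sum.inl b)
        = ((∑ b, β (Sum.inl b) * X ω (Sum.inl b))
            + ∑ b, (∑ a', β (Sum.inr a') * (M21 * M11⁻¹) a' b) * X ω (Sum.inl b))
          - ∑ b, γ₁ b * X ω (Sum.inl b) := by
      rw [← Finset.sum_add_distrib, ← Finset.sum_sub_distrib]
      exact Finset.sum_congr rfl fun b _ => by ring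
    rw [hpl ω, e1, e2, e3]
    ring
  have hK1 : ∀ a, ∫ ω, V2 ω a * (G₂ ω - ∑ a', β (Sum.inr a') * V2 ω a') ∂μ = 0 := by
    intro a
    simp_rw [hdecomp, mul_add]
    rw [integral_add (int_mul (hVmem a) hGres)
        (int_mul (hVmem a) (memℒp_sum _ fun b => hXi (Sum.inl b)))]
    have p1 : ∫ ω, V2 ω a * (G ω - ∑ j, β j * X ω j) ∂μ = 0 := by
      have e : ∀ ω, V2 ω a * (G ω - ∑ j, β j * X ω j)
          = X ω (Sum.inr a) * (G ω - ∑ j, β j * X ω j)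
            - ∑ b, (M21 * M11⁻¹) a b * (X ω (Sum.inl b) * (G ω - ∑ j, β j * X ω j)) := by
        intro ω
        rw [hV2 ω a, sub_mul, Finset.sum_mul]
        congr 1
        exact Finset.sum_congr rfl fun b _ => mul_assoc _ _ _
      simp_rw [e]
      rw [integral_sub (int_mul (hXi _) hGres)
          (integrable_finset_sum _ fun b _ => (int_mul (hXi _) hGres).const_mul _),
        integral_finset_sum _ fun b _ => (int_mul (hXi _) hGres).const_mul _]
      simp_rw [integral_const_mul, hres]
      simp
    have p2 : ∫ ω, V2 ω a
        * ∑ b, (β (Sum.inl b) + (∑ a', β (Sum.inr a') * (M21 * M11⁻¹) a' b) - γ₁ b)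
            * X ω (Sum.inl b) ∂μ = 0 := by
      rw [int_mul_sum (hVmem a) _ fun b => hXi (Sum.inl b)]
      simp_rw [hortho]
      simp
    rw [p1, p2, add_zero]
  -- normal equations in V2 form
  have hSmem : MemLp (fun ω => ∑ a', β (Sum.inr a') * V2 ω a') 2 μ := memℒp_sum _ hVmem
  have hK2 : ∀ a, ∫ ω, V2 ω a * G₂ ω ∂μ = ∑ a', MV a a' * β (Sum.inr a') := by
    intro a
    have e : ∀ ω, V2 ω a * G₂ ω
        = V2 ω a * (G₂ ω - ∑ a', β (Sum.inr a') * V2 ω a')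
          + ∑ a', β (Sum.inr a') * (V2 ω a * V2 ω a') := by
      intro ω
      have h4 : V2 ω a * ∑ a', β (Sum.inr a') * V2 ω a'
          = ∑ a', β (Sum.inr a') * (V2 ω a * V2 ω a') := by
        rw [Finset.mul_sum]; exact Finset.sum_congr rfl fun _ _ => by ring
      rw [← h4]; ring
    simp_rw [e]
    have hG₂res : MemLp (fun ω => G₂ ω - ∑ a', β (Sum.inr a') * V2 ω a') 2 μ :=
      hg₂.sub hSmem
    rw [integral_add (int_mul (hVmem a) hG₂res)
        (integrable_finset_sum _ fun a' _ => (int_mul (hVmem a) (hVmem a')).const_mul _),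
      hK1 a, zero_add,
      integral_finset_sum _ fun a' _ => (int_mul (hVmem a) (hVmem a')).const_mul _]
    simp_rw [integral_const_mul]
    exact Finset.sum_congr rfl fun a' _ => by rw [hMVentry]; ring
  -- MV positive definite
  have hMVpos : MV.PosDef := by
    refine Matrix.PosDef.of_dotProduct_mulVec_pos ?_ ?_
    · ext a b
      simp only [Matrix.conjTranspose_apply, star_trivial]
      rw [hMVentry, hMVentry]
      simp_rw [mul_comm]
    · intro x hx
      set y : (Fin p₁ ⊕ Fin p₂) → ℝ :=
        Sum.elim (fun b => -∑ a, x a * (M21 * M11⁻¹) a b) x with hy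
      have hy0 : y ≠ 0 := fun h0 => hx (funext fun a => by
        have := congrFun h0 (Sum.inr a); simpa [hy] using this)
      have hpt : ∀ ω, ∑ a, x a * V2 ω a = ∑ i, y i * X ω i := by
        intro ω
        rw [Fintype.sum_sum_type]
        simp only [hy, Sum.elim_inl, Sum.elim_inr]
        have e1 : ∀ a, x a * V2 ω a
            = x a * X ω (Sum.inr a)
              - ∑ b, x a * ((M21 * M11⁻¹) a b * X ω (Sum.inl b)) := by
          intro a; rw [hV2 ω a, mul_sub, Finset.mul_sum]
        rw [Finset.sum_congr rfl fun a _ => e1 a, Finset.sum_sub_distrib]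
        have e2 : ∑ a, ∑ b, x a * ((M21 * M11⁻¹) a b * X ω (Sum.inl b))
            = ∑ b, (∑ a, x a * (M21 * M11⁻¹) a b) * X ω (Sum.inl b) := by
          rw [Finset.sum_comm]
          exact Finset.sum_congr rfl fun b _ => by
            rw [Finset.sum_mul]; exact Finset.sum_congr rfl fun a _ => by ring
        have e3 : ∑ b, -(∑ a, x a * (M21 * M11⁻¹) a b) * X ω (Sum.inl b)
            = -∑ b, (∑ a, x a * (M21 * M11⁻¹) a b) * X ω (Sum.inl b) := by
          rw [← Finset.sum_neg_distrib]
          exact Finset.sum_congr rfl fun b _ => by ring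
        rw [e2, e3]
        ring
      have q1 : star x ⬝ᵥ MV *ᵥ x = ∫ ω, (∑ a, x a * V2 ω a) ^ 2 ∂μ := by
        rw [int_sq_sum x (fun a => hVmem a)]
        simp only [dotProduct, Matrix.mulVec, Pi.star_apply, star_trivial]
        exact Finset.sum_congr rfl fun a _ => by
          rw [Finset.mul_sum, Finset.mul_sum]
          exact Finset.sum_congr rfl fun a' _ => by rw [hMVentry]; ring
      have q2 : star y ⬝ᵥ M *ᵥ y = ∫ ω, (∑ i, y i * X ω i) ^ 2 ∂μ := by
        rw [int_sq_sum y hXi]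
        simp only [dotProduct, Matrix.mulVec, Pi.star_apply, star_trivial]
        exact Finset.sum_congr rfl fun i _ => by
          rw [Finset.mul_sum, Finset.mul_sum]
          exact Finset.sum_congr rfl fun j _ => by rw [hMentry]; ring
      have hpos := hMpos.dotProduct_mulVec_pos hy0
      rw [q2] at hpos
      rw [q1]
      simp_rw [hpt]
      exact hpos
  have hMVdet : IsUnit MV.det := isUnit_iff_ne_zero.mpr hMVpos.det_pos.ne'
  constructor
  · have h1 : MV.mulVec (fun a => β (Sum.inr a)) = fun a => ∫ ω, V2 ω a * G₂ ω ∂μ :=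
      funext fun a => by rw [hK2 a]; simp [Matrix.mulVec, dotProduct]
    rw [← h1, Matrix.mulVec_mulVec, Matrix.nonsing_inv_mul _ hMVdet, Matrix.one_mulVec]
  · intro b₂
    have hRmem : MemLp (fun ω => G₂ ω - ∑ a', β (Sum.inr a') * V2 ω a') 2 μ :=
      hg₂.sub hSmem
    have hDmem : MemLp (fun ω => ∑ a, (β (Sum.inr a) - b₂ a) * V2 ω a) 2 μ :=
      memℒp_sum _ hVmem
    have e2 : ∀ ω, (G₂ ω - ∑ a, b₂ a * V2 ω a) ^ 2
        = (G₂ ω - ∑ a, β (Sum.inr a) * V2 ω a) ^ 2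
          + (2 * ((G₂ ω - ∑ a', β (Sum.inr a') * V2 ω a')
                * ∑ a, (β (Sum.inr a) - b₂ a) * V2 ω a)
            + (∑ a, (β (Sum.inr a) - b₂ a) * V2 ω a) ^ 2) := by
      intro ω
      have h5 : ∑ a, (β (Sum.inr a) - b₂ a) * V2 ω a
          = ∑ a, β (Sum.inr a) * V2 ω a - ∑ a, b₂ a * V2 ω a := by
        rw [← Finset.sum_sub_distrib]
        exact Finset.sum_congr rfl fun a _ => by ring
      rw [h5]; ring
    have hcross : ∫ ω, (G₂ ω - ∑ a', β (Sum.inr a') * V2 ω a')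
        * ∑ a, (β (Sum.inr a) - b₂ a) * V2 ω a ∂μ = 0 := by
      rw [int_mul_sum hRmem _ hVmem]
      have h6 : ∀ a, ∫ ω, (G₂ ω - ∑ a', β (Sum.inr a') * V2 ω a') * V2 ω a ∂μ = 0 := by
        intro a
        rw [show ∫ ω, (G₂ ω - ∑ a', β (Sum.inr a') * V2 ω a') * V2 ω a ∂μ
            = ∫ ω, V2 ω a * (G₂ ω - ∑ a', β (Sum.inr a') * V2 ω a') ∂μ from by
              simp_rw [mul_comm]]
        exact hK1 a
      simp_rw [h6]
      simp
    calc ∫ ω, (G₂ ω - ∑ a, β (Sum.inr a) * V2 ω a) ^ 2 ∂μ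
        ≤ ∫ ω, (G₂ ω - ∑ a, β (Sum.inr a) * V2 ω a) ^ 2 ∂μ
          + (2 * ∫ ω, (G₂ ω - ∑ a', β (Sum.inr a') * V2 ω a')
                * ∑ a, (β (Sum.inr a) - b₂ a) * V2 ω a ∂μ
            + ∫ ω, (∑ a, (β (Sum.inr a) - b₂ a) * V2 ω a) ^ 2 ∂μ) := by
          rw [hcross, mul_zero, zero_add]
          exact le_add_of_nonneg_right (integral_nonneg fun ω => sq_nonneg _)
      _ = ∫ ω, (G₂ ω - ∑ a, b₂ a * V2 ω a) ^ 2 ∂μ := by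
          simp_rw [e2]
          have i1 : Integrable (fun ω => 2 * ((G₂ ω - ∑ a', β (Sum.inr a') * V2 ω a')
                * ∑ a, (β (Sum.inr a) - b₂ a) * V2 ω a)) μ :=
            (int_mul hRmem hDmem).const_mul 2
          have i2 : Integrable (fun ω => (∑ a, (β (Sum.inr a) - b₂ a) * V2 ω a) ^ 2) μ :=
            hDmem.integrable_sq
          have i12 : Integrable (fun ω => 2 * ((G₂ ω - ∑ a', β (Sum.inr a') * V2 ω a')
                * ∑ a, (β (Sum.inr a) - b₂ a) * V2 ω a)
              + (∑ a, (β (Sum.inr a) - b₂ a) * V2 ω a) ^ 2) μ := i1.add i2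
          rw [integral_add hRmem.integrable_sq i12, integral_add i1 i2, integral_const_mul]
end Helpers

/-- Partly linear case: if `g(X) = γ₁'X₁ + g₂(X₂)`, then with `V₂` the population
residual of `X₂` on `X₁`, the subvector `β₂` of the best linear approximation
coefficient satisfies `β₂ = E[V₂V₂']⁻¹ E[V₂ g₂(X₂)]`, the minimizer over `b₂` of
`E[(g₂(X₂) - b₂'V₂)²]`. -/
theorem stmt16
    {Ω : Type*} [MeasurableSpace Ω] (μ : Measure Ω) [IsProbabilityMeasure μ]
    {p₁ p₂ : ℕ}
    (X : Ω → (Fin p₁ ⊕ Fin p₂) → ℝ) (g : ((Fin p₁ ⊕ Fin p₂) → ℝ) → ℝ)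
    (γ₁ : Fin p₁ → ℝ) (g₂ : (Fin p₂ → ℝ) → ℝ)
    (hpl : ∀ v : (Fin p₁ ⊕ Fin p₂) → ℝ,
      g v = (∑ j, γ₁ j * v (Sum.inl j)) + g₂ (fun a => v (Sum.inr a)))
    (hXi : ∀ i, MemLp (fun ω => X ω i) 2 μ)
    (hg : MemLp (fun ω => g (X ω)) 2 μ)
    (hg₂ : MemLp (fun ω => g₂ (fun a => X ω (Sum.inr a))) 2 μ)
    (M : Matrix (Fin p₁ ⊕ Fin p₂) (Fin p₁ ⊕ Fin p₂) ℝ)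
    (hM : M = Matrix.of fun i j => ∫ ω, X ω i * X ω j ∂μ)
    (hMpos : M.PosDef)
    (β : (Fin p₁ ⊕ Fin p₂) → ℝ)
    (hβ : β = M⁻¹.mulVec fun i => ∫ ω, X ω i * g (X ω) ∂μ)
    (M11 : Matrix (Fin p₁) (Fin p₁) ℝ)
    (hM11 : M11 = Matrix.of fun a b => ∫ ω, X ω (Sum.inl a) * X ω (Sum.inl b) ∂μ)
    (M21 : Matrix (Fin p₂) (Fin p₁) ℝ)
    (hM21 : M21 = Matrix.of fun a b => ∫ ω, X ω (Sum.inr a) * X ω (Sum.inl b) ∂μ)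
    (V2 : Ω → Fin p₂ → ℝ)
    (hV2 : ∀ ω a, V2 ω a =
      X ω (Sum.inr a) - ∑ b, (M21 * M11⁻¹) a b * X ω (Sum.inl b))
    (MV : Matrix (Fin p₂) (Fin p₂) ℝ)
    (hMV : MV = Matrix.of fun a b => ∫ ω, V2 ω a * V2 ω b ∂μ) :
    (fun a => β (Sum.inr a)) =
        MV⁻¹.mulVec (fun a => ∫ ω, V2 ω a * g₂ (fun b => X ω (Sum.inr b)) ∂μ) ∧
      ∀ b₂ : Fin p₂ → ℝ,
        (∫ ω, (g₂ (fun b => X ω (Sum.inr b)) - ∑ a, β (Sum.inr a) * V2 ω a) ^ 2 ∂μ) ≤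
          ∫ ω, (g₂ (fun b => X ω (Sum.inr b)) - ∑ a, b₂ a * V2 ω a) ^ 2 ∂μ :=
  aux16 μ X (fun ω => g (X ω)) (fun ω => g₂ (fun a => X ω (Sum.inr a))) γ₁
    (fun ω => hpl (X ω)) hXi hg hg₂ M hM hMpos β hβ M11 hM11 M21 hM21 V2 hV2 MV hMV
end Helpers
end

section
/- Let H be a class of measurable functions of Z and X a square-integrable random vector with 0 < E[|X|²] < ∞. For the product class G = {(z,x) ↦ h(z)·x : h ∈ H}, the L¹ bracketing number satisfies N_[](ε, G, ‖·‖₁) ≤ N_[](ε/‖X‖₂, H, ‖·‖₂), where ‖·‖_r denotes the L_r(P) norm. -/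
open MeasureTheory

/-- Minimal number of `ε`-brackets (w.r.t. the norm `nrm`) needed to cover the function
class `F`: the bracketing covering number `N_[](ε, F, nrm)`. -/
noncomputable def bracketingNumber {Ω : Type*} (F : Set (Ω → ℝ))
    (nrm : (Ω → ℝ) → ℝ) (ε : ℝ) : ℕ∞ :=
  sInf {n : ℕ∞ | ∃ B : Finset ((Ω → ℝ) × (Ω → ℝ)), (B.card : ℕ∞) = n ∧
    ∀ f ∈ F, ∃ b ∈ B, (∀ x, b.1 x ≤ f x ∧ f x ≤ b.2 x) ∧
      nrm (fun x => b.2 x - b.1 x) ≤ ε}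

lemma max_sub_max_neg (a : ℝ) : max a 0 - max (-a) 0 = a := by
  rcases le_total a 0 with h | h
  · rw [max_eq_right h, max_eq_left (by linarith)]; ring
  · rw [max_eq_left h, max_eq_right (by linarith)]; ring

lemma mul_max_split (a b : ℝ) : b * a = b * max a 0 - b * max (-a) 0 := by
  rcases le_total a 0 with h | h
  · rw [max_eq_right h, max_eq_left (by linarith)]; ring
  · rw [max_eq_left h, max_eq_right (by linarith)]; ring

lemma max_add_max_neg (a : ℝ) : max a 0 + max (-a) 0 = |a| := by
  rcases le_total a 0 with h | h
  · rw [max_eq_right h, max_eq_left (by linarith), abs_of_nonpos h]; ring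
  · rw [max_eq_left h, max_eq_right (by linarith), abs_of_nonneg h]; ring

/-- For a class `H` of measurable functions of `Z` and square-integrable `X` with
`0 < E[|X|²] < ∞`, the product class `G = {h(Z)·X : h ∈ H}` satisfies
`N_[](ε, G, ‖·‖₁) ≤ N_[](ε/‖X‖₂, H, ‖·‖₂)`. -/
theorem stmt17
    {Ω γty : Type*} [MeasurableSpace Ω] [MeasurableSpace γty]
    (μ : Measure Ω) [IsProbabilityMeasure μ]
    (Z : Ω → γty) (X : Ω → ℝ)
    (hX2 : MemLp X 2 μ) (hXpos : 0 < ∫ ω, X ω ^ 2 ∂μ)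
    (H : Set (Ω → ℝ))
    (hHmeas : ∀ h ∈ H, Measurable[MeasurableSpace.comap Z inferInstance] h)
    (G : Set (Ω → ℝ))
    (hG : G = {f | ∃ h ∈ H, f = fun ω => h ω * X ω})
    (ε : ℝ) (hε : 0 < ε) :
    bracketingNumber G (fun f => ∫ ω, |f ω| ∂μ) ε ≤
      bracketingNumber H (fun f => Real.sqrt (∫ ω, f ω ^ 2 ∂μ))
        (ε / Real.sqrt (∫ ω, X ω ^ 2 ∂μ)) := by
  classical
  set s : ℝ := Real.sqrt (∫ ω, X ω ^ 2 ∂μ) with hs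
  have hspos : 0 < s := Real.sqrt_pos.mpr hXpos
  refine le_sInf ?_
  rintro n ⟨B, hBcard, hBcov⟩
  -- the map sending a bracket for `H` to a bracket for `G`
  let pad : (Ω → ℝ) → (Ω → ℝ) := fun g =>
    if Integrable (fun ω => g ω * |X ω|) μ ∧ ¬ MemLp g 2 μ
    then (fun ω => g ω ^ 2) else 0
  have padnn : ∀ g ω, 0 ≤ pad g ω := by
    intro g ω
    by_cases hc : Integrable (fun ω => g ω * |X ω|) μ ∧ ¬ MemLp g 2 μ
    · simp only [pad, if_pos hc]; positivity
    · simp only [pad, if_neg hc, Pi.zero_apply]; exact le_rfl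
  let φ : ((Ω → ℝ) × (Ω → ℝ)) → ((Ω → ℝ) × (Ω → ℝ)) := fun b =>
    (fun ω => b.1 ω * max (X ω) 0 - b.2 ω * max (-X ω) 0,
     fun ω => b.2 ω * max (X ω) 0 - b.1 ω * max (-X ω) 0
       + pad (fun ω => b.2 ω - b.1 ω) ω)
  have hmem : ((B.image φ).card : ℕ∞) ∈ {n : ℕ∞ | ∃ B : Finset ((Ω → ℝ) × (Ω → ℝ)),
      (B.card : ℕ∞) = n ∧ ∀ f ∈ G, ∃ b ∈ B, (∀ x, b.1 x ≤ f x ∧ f x ≤ b.2 x) ∧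
        (∫ ω, |b.2 ω - b.1 ω| ∂μ) ≤ ε} := by
    refine ⟨B.image φ, rfl, ?_⟩
    intro f hf
    rw [hG] at hf
    obtain ⟨h, hH, rfl⟩ := hf
    obtain ⟨b, hbB, hbr, hbn⟩ := hBcov h hH
    obtain ⟨l, u⟩ := b
    set g : Ω → ℝ := fun ω => u ω - l ω with hgdef
    have hg0 : ∀ ω, 0 ≤ g ω := fun ω => by
      have := (hbr ω).1; have := (hbr ω).2; simp only [hgdef]; linarith
    refine ⟨φ (l, u), Finset.mem_image_of_mem φ hbB, ?_, ?_⟩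
    · intro x
      have hXp : 0 ≤ max (X x) 0 := le_max_right _ _
      have hXm : 0 ≤ max (-X x) 0 := le_max_right _ _
      have hXe : X x = max (X x) 0 - max (-X x) 0 := (max_sub_max_neg _).symm
      have h1 := (hbr x).1
      have h2 := (hbr x).2
      have hp := padnn g x
      have key : h x * X x = h x * max (X x) 0 - h x * max (-X x) 0 :=
        mul_max_split (X x) (h x)
      constructor
      · show l x * max (X x) 0 - u x * max (-X x) 0 ≤ h x * X x
        have a1 : l x * max (X x) 0 ≤ h x * max (X x) 0 :=
          mul_le_mul_of_nonneg_right h1 hXp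
        have a2 : h x * max (-X x) 0 ≤ u x * max (-X x) 0 :=
          mul_le_mul_of_nonneg_right h2 hXm
        linarith [key]
      · show h x * X x ≤ u x * max (X x) 0 - l x * max (-X x) 0 + pad g x
        have a1 : h x * max (X x) 0 ≤ u x * max (X x) 0 :=
          mul_le_mul_of_nonneg_right h2 hXp
        have a2 : l x * max (-X x) 0 ≤ h x * max (-X x) 0 :=
          mul_le_mul_of_nonneg_right h1 hXm
        linarith [key]
    · -- the norm bound
      have hW : ∀ ω, (φ (l, u)).2 ω - (φ (l, u)).1 ω = g ω * |X ω| + pad g ω := by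
        intro ω
        show u ω * max (X ω) 0 - l ω * max (-X ω) 0 + pad g ω
            - (l ω * max (X ω) 0 - u ω * max (-X ω) 0) = g ω * |X ω| + pad g ω
        rw [← max_add_max_neg (X ω)]
        simp only [hgdef]; ring
      have habs : (fun ω => |(φ (l, u)).2 ω - (φ (l, u)).1 ω|)
          = fun ω => g ω * |X ω| + pad g ω := by
        funext ω
        rw [hW ω]
        exact abs_of_nonneg (add_nonneg (mul_nonneg (hg0 ω) (abs_nonneg _)) (padnn g ω))
      show (∫ ω, |(φ (l, u)).2 ω - (φ (l, u)).1 ω| ∂μ) ≤ ε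
      rw [habs]
      by_cases hc : Integrable (fun ω => g ω * |X ω|) μ ∧ ¬ MemLp g 2 μ
      · -- pathological case: the padded width is not integrable, integral is 0
        have hpadg : pad g = fun ω => g ω ^ 2 := if_pos hc
        have hnint : ¬ Integrable (fun ω => g ω * |X ω| + pad g ω) μ := by
          intro hint
          have hsq : Integrable (fun ω => g ω ^ 2) μ := by
            have h' := hint.sub hc.1
            have e : ((fun ω => g ω * |X ω| + pad g ω) - fun ω => g ω * |X ω|)
                = fun ω => g ω ^ 2 := by
              funext ω
              simp only [Pi.sub_apply, hpadg]
              ring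
            rwa [e] at h'
          have haesm : AEStronglyMeasurable g μ := by
            have : g = fun ω => Real.sqrt (g ω ^ 2) :=
              funext fun ω => (Real.sqrt_sq (hg0 ω)).symm
            rw [this]
            exact Real.continuous_sqrt.comp_aestronglyMeasurable hsq.aestronglyMeasurable
          exact hc.2 ((memLp_two_iff_integrable_sq haesm).mpr hsq)
        rw [integral_undef hnint]
        exact hε.le
      · have hpadg : pad g = 0 := if_neg hc
        simp only [hpadg, Pi.zero_apply, add_zero]
        by_cases hint : Integrable (fun ω => g ω * |X ω|) μ
        · -- genuine Cauchy–Schwarz case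
          have hg2 : MemLp g 2 μ := by
            by_contra hng
            exact hc ⟨hint, hng⟩
          have hCS : (∫ ω, ‖g ω‖ * ‖X ω‖ ∂μ)
              ≤ (∫ ω, ‖g ω‖ ^ (2 : ℝ) ∂μ) ^ ((1 : ℝ) / 2)
                * (∫ ω, ‖X ω‖ ^ (2 : ℝ) ∂μ) ^ ((1 : ℝ) / 2) := by
            have hconj : (2 : ℝ).HolderConjugate 2 :=
              ⟨by norm_num, by norm_num, by norm_num⟩
            have h2 : (ENNReal.ofReal (2 : ℝ)) = 2 := by
              simp [ENNReal.ofReal_ofNat]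
            have hg2' : MemLp g (ENNReal.ofReal (2 : ℝ)) μ := by rw [h2]; exact hg2
            have hX2' : MemLp X (ENNReal.ofReal (2 : ℝ)) μ := by rw [h2]; exact hX2
            exact integral_mul_norm_le_Lp_mul_Lq hconj hg2' hX2'
          have e1 : (fun ω => ‖g ω‖ * ‖X ω‖) = fun ω => g ω * |X ω| := by
            funext ω
            rw [Real.norm_eq_abs, Real.norm_eq_abs, abs_of_nonneg (hg0 ω)]
          have e2 : ∀ (a : ℝ), ‖a‖ ^ (2 : ℝ) = a ^ 2 := by
            intro a
            rw [Real.norm_eq_abs, show ((2 : ℝ)) = ((2 : ℕ) : ℝ) by norm_num,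
              Real.rpow_natCast, sq_abs]
          have e3 : ∀ (c : ℝ), 0 ≤ c → c ^ ((1 : ℝ) / 2) = Real.sqrt c := by
            intro c hcn
            rw [Real.sqrt_eq_rpow]
          have hintg2 : (0:ℝ) ≤ ∫ ω, g ω ^ 2 ∂μ :=
            integral_nonneg fun ω => sq_nonneg _
          have hintX2 : (0:ℝ) ≤ ∫ ω, X ω ^ 2 ∂μ :=
            integral_nonneg fun ω => sq_nonneg _
          calc (∫ ω, g ω * |X ω| ∂μ)
              ≤ (∫ ω, g ω ^ 2 ∂μ) ^ ((1 : ℝ) / 2) * (∫ ω, X ω ^ 2 ∂μ) ^ ((1 : ℝ) / 2) := by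
                rw [← e1]
                simpa only [e2] using hCS
            _ = Real.sqrt (∫ ω, g ω ^ 2 ∂μ) * s := by
                rw [e3 _ hintg2, e3 _ hintX2]
            _ ≤ (ε / s) * s := by
                apply mul_le_mul_of_nonneg_right _ hspos.le
                exact hbn
            _ = ε := div_mul_cancel₀ ε hspos.ne'
        · rw [integral_undef hint]
          exact hε.le
  calc bracketingNumber G (fun f => ∫ ω, |f ω| ∂μ) ε
      ≤ ((B.image φ).card : ℕ∞) := sInf_le hmem
    _ ≤ (B.card : ℕ∞) := by exact_mod_cast Finset.card_image_le
    _ = n := hBcard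
end
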